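/- A Motzkin tree X is closable (the skeleton of at least one closed de Bruijn lambda term) if and only if either X = l(Y) for some arbitrary Motzkin tree Y, or X = a(Y,Z) where both Y and Z are closable. (This inductive characterization is the context-free grammar generating exactly the closable skeletons.) -/
import Mathlib


/-- Motzkin trees (binary-unary trees): leaf `v`, unary `l`, binary `a`. -/
inductive Mot : Type
  | v : Mot
  | l : Mot → Mot
  | a : Mot → Mot → Mot
deriving DecidableEq

/-- Lambda terms in de Bruijn form. -/
inductive Lam : Type
  | v : Nat → Lam
  | l : Lam → Lam
  | a : Lam → Lam → Lam
deriving DecidableEq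

/-- `t` is closed at depth `d`. -/
def Lam.closedAt : Lam → Nat → Prop
  | .v i, d => i < d
  | .l t, d => t.closedAt (d + 1)
  | .a s t, d => s.closedAt d ∧ t.closedAt d

/-- The Motzkin-tree skeleton of a de Bruijn term. -/
def Lam.skel : Lam → Mot
  | .v _ => .v
  | .l t => .l t.skel
  | .a s t => .a s.skel t.skel

/-- A Motzkin tree is closable if it is the skeleton of at least one closed term. -/
def Mot.Closable (X : Mot) : Prop := ∃ t : Lam, t.closedAt 0 ∧ t.skel = X

/-- Fill a Motzkin tree with zero de Bruijn indices. -/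
def Mot.fill : Mot → Lam
  | .v => .v 0
  | .l t => .l t.fill
  | .a s t => .a s.fill t.fill

lemma Mot.fill_skel (X : Mot) : X.fill.skel = X := by
  induction X <;> simp [Mot.fill, Lam.skel, *]

lemma Mot.fill_closed (X : Mot) (d : Nat) (hd : 0 < d) : X.fill.closedAt d := by
  induction X generalizing d with
  | v => simpa [Mot.fill, Lam.closedAt]
  | l t ih => exact ih (d+1) (Nat.succ_pos d)
  | a s t ihs iht => exact ⟨ihs d hd, iht d hd⟩

/-- Grammar for closable skeletons: `X` is closable iff `X = l(Y)` for an arbitrary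
Motzkin tree `Y`, or `X = a(Y,Z)` with both `Y` and `Z` closable. -/

theorem stmt4 (X : Mot) :
    X.Closable ↔
      (∃ Y : Mot, X = .l Y) ∨
      (∃ Y Z : Mot, X = .a Y Z ∧ Y.Closable ∧ Z.Closable) := by
  constructor
  · rintro ⟨t, hc, hs⟩
    cases t with
    | v i => exact absurd hc (by simp [Lam.closedAt])
    | l u => exact Or.inl ⟨u.skel, hs.symm⟩
    | a s u =>
        refine Or.inr ⟨s.skel, u.skel, hs.symm, ⟨s, hc.1, rfl⟩, ⟨u, hc.2, rfl⟩⟩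
  · rintro (⟨Y, rfl⟩ | ⟨Y, Z, rfl, ⟨s, hs, rfl⟩, ⟨u, hu, rfl⟩⟩)
    · exact ⟨.l Y.fill, Y.fill_closed 1 Nat.one_pos, by simp [Lam.skel, Mot.fill_skel]⟩
    · exact ⟨.a s u, ⟨hs, hu⟩, rfl⟩
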